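/- Every primary pseudoperfect number is squarefree. -/

import Mathlib

/-- The map `f` from the paper: `f n = n - 1` if `n` is prime, and otherwise
`f n = n - d n` where `d n = n / n.minFac` is the largest divisor `d` of `n`
with `1 < d < n`. -/
def egf (n : ℕ) : ℕ := if n.Prime then n - 1 else n - n / n.minFac

/-- `F n = {n, f n, f (f n), …, 1}`: the set of iterates of `f` starting at `n`
(the iterates strictly decrease to `1`; we collect all positive iterates). -/
def Fset (n : ℕ) : Set ℕ := {m | 0 < m ∧ ∃ i : ℕ, egf^[i] n = m}

/-- The sum `∑_{p^k ∣ n} 1/p^k` over all prime power divisors `p^k` of `n`. -/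
def ppSum (n : ℕ) : ℚ := ∑ d ∈ n.divisors.filter (fun d => IsPrimePow d), (1 : ℚ) / d

/-- A prime power pseudoperfect number: `n > 1` with `∑_{p^k ∣ n} 1/p^k + 1/n = 1`. -/
def PPPseudoperfect (n : ℕ) : Prop := 1 < n ∧ ppSum n + 1 / n = 1

/-- A prime power Giuga number: a composite `n` with `∑_{p^k ∣ n} 1/p^k - 1/n` a positive integer. -/
def PPGiuga (n : ℕ) : Prop :=
  1 < n ∧ ¬ n.Prime ∧ ∃ m : ℕ, 0 < m ∧ ppSum n - 1 / n = m

/-- A primary pseudoperfect number: `n > 1` with `∑_{p ∣ n} 1/p + 1/n = 1`. -/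
def PrimaryPseudoperfect (n : ℕ) : Prop :=
  1 < n ∧ (∑ p ∈ n.primeFactors, (1 : ℚ) / p) + 1 / n = 1

/-- A Giuga number: a composite `n` with `∑_{p ∣ n} 1/p - 1/n` a positive integer. -/
def Giuga (n : ℕ) : Prop :=
  1 < n ∧ ¬ n.Prime ∧ ∃ m : ℕ, 0 < m ∧ (∑ p ∈ n.primeFactors, (1 : ℚ) / p) - 1 / n = m

/-- A pseudoperfect number: a positive integer that is the sum of a nonempty set of
distinct divisors `d` with `0 < d < n`. -/
def Pseudoperfect (n : ℕ) : Prop :=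
  0 < n ∧ ∃ s : Finset ℕ, s ⊆ n.properDivisors ∧ s.Nonempty ∧ ∑ d ∈ s, d = n

/-- every primary pseudoperfect number is squarefree. -/
theorem stmt9 (n : ℕ) (h : PrimaryPseudoperfect n) : Squarefree n := by
  obtain ⟨hn, heq⟩ := h
  have hn0 : (n : ℚ) ≠ 0 := Nat.cast_ne_zero.mpr (by omega)
  -- natural number identity
  have key : (∑ q ∈ n.primeFactors, n / q) + 1 = n := by
    have hcast : ((∑ q ∈ n.primeFactors, n / q : ℕ) : ℚ) + 1 = n := by
      rw [Nat.cast_sum]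
      have hrw : ∀ q ∈ n.primeFactors, ((n / q : ℕ) : ℚ) = (n : ℚ) * (1 / q) := by
        intro q hq
        rw [Nat.cast_div (Nat.dvd_of_mem_primeFactors hq)
          (Nat.cast_ne_zero.mpr (Nat.prime_of_mem_primeFactors hq).ne_zero)]
        ring
      rw [Finset.sum_congr rfl hrw, ← Finset.mul_sum]
      have := heq
      field_simp at this
      linarith [this]
    exact_mod_cast hcast
  rw [Nat.squarefree_iff_prime_squarefree]
  intro p hp hpp
  have hpn : p ∣ n := dvd_trans (dvd_mul_right p p) hpp
  have hS : p ∣ ∑ q ∈ n.primeFactors, n / q := by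
    refine Finset.dvd_sum fun q hq => ?_
    have hq' := Nat.prime_of_mem_primeFactors hq
    have hqn := Nat.dvd_of_mem_primeFactors hq
    rw [Nat.dvd_div_iff_mul_dvd hqn]
    rcases eq_or_ne q p with rfl | hne
    · exact hpp
    · exact (Nat.Coprime.mul_dvd_of_dvd_of_dvd
        ((Nat.coprime_primes hq' hp).mpr hne) hqn hpn)
  have h1 : p ∣ n - ∑ q ∈ n.primeFactors, n / q := Nat.dvd_sub hpn hS
  have h2 : n - ∑ q ∈ n.primeFactors, n / q = 1 := by omega
  rw [h2] at h1
  exact hp.one_lt.ne' (Nat.dvd_one.mp h1)
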